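/- arXiv:2209.13686 — 4 statements merged into one kernel-verified Lean document; each statement's English description precedes it below -/
import Mathlib

section
/- Let σ be a uniformly random permutation of a finite set H_0 ⊆ {1,...,m} (extended by the identity outside H_0), independent of the p-values p_1,...,p_m, and let m_0 = #H_0. If (1/m)·Σ_{i∈H_0} P(p_i ≤ t) ≤ t for all t ∈ [0,1], then the rescaled permuted p-values p̃_i = (m/m_0)·p_{σ(i)} satisfy P(p̃_i ≤ α) ≤ α for every i ∈ H_0 and every α ∈ [0,1]. -/
open MeasureTheory Set ENNReal

lemma card_fixing {n : ℕ} (H0 : Finset (Fin n)) :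
    (Finset.univ.filter (fun g : Equiv.Perm (Fin n) => ∀ k, k ∉ H0 → g k = k)).card
      = (H0.card).factorial := by
  have h1 : (Finset.univ.filter
      (fun g : Equiv.Perm (Fin n) => ∀ k, k ∉ H0 → g k = k)).card
      = Fintype.card { f : Equiv.Perm (Fin n) // ∀ a, ¬(a ∈ H0) → f a = a } := by
    rw [Fintype.card_subtype]
  rw [h1, ← Fintype.card_congr (Equiv.Perm.subtypeEquivSubtypePerm (fun x : Fin n => x ∈ H0)),
    Fintype.card_perm, Fintype.card_coe]

lemma fiber_card_eq {n : ℕ} (H0 : Finset (Fin n)) (i : Fin n)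
    {j j' : Fin n} (hj : j ∈ H0) (hj' : j' ∈ H0) :
    (Finset.univ.filter
        (fun g : Equiv.Perm (Fin n) => (∀ k, k ∉ H0 → g k = k) ∧ g i = j)).card
      = (Finset.univ.filter
        (fun g : Equiv.Perm (Fin n) => (∀ k, k ∉ H0 → g k = k) ∧ g i = j')).card := by
  apply Finset.card_bij (fun g _ => Equiv.swap j j' * g)
  · intro g hg
    simp only [Finset.mem_filter, Finset.mem_univ, true_and] at hg ⊢
    refine ⟨fun k hk => ?_, ?_⟩
    · simp only [Equiv.Perm.mul_apply, hg.1 k hk]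
      exact Equiv.swap_apply_of_ne_of_ne (fun h => hk (h ▸ hj)) (fun h => hk (h ▸ hj'))
    · simp [Equiv.Perm.mul_apply, hg.2, Equiv.swap_apply_left]
  · intro g hg g' hg' h
    exact mul_left_cancel h
  · intro h hh
    simp only [Finset.mem_filter, Finset.mem_univ, true_and] at hh
    refine ⟨Equiv.swap j j' * h, ?_, ?_⟩
    · simp only [Finset.mem_filter, Finset.mem_univ, true_and]
      refine ⟨fun k hk => ?_, ?_⟩
      · simp only [Equiv.Perm.mul_apply, hh.1 k hk]
        exact Equiv.swap_apply_of_ne_of_ne (fun h => hk (h ▸ hj)) (fun h => hk (h ▸ hj'))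
      · simp [Equiv.Perm.mul_apply, hh.2, Equiv.swap_apply_right]
    · rw [← mul_assoc, Equiv.swap_mul_self, one_mul]

/-- A uniformly random permutation `σ` of `H0` (identity outside `H0`), independent of the
p-values, turns average significance level control into classical significance level control
for the rescaled permuted p-values `p̃_i = (m/m₀)·p_{σ(i)}`. -/
theorem stmt1 {Ω : Type} [MeasurableSpace Ω] (μ : Measure Ω) [IsProbabilityMeasure μ]
    (m : ℕ) (hm : 0 < m) (p : Fin m → Ω → ℝ)
    (hp : ∀ i ω, p i ω ∈ Set.Icc (0:ℝ) 1)
    (H0 : Finset (Fin m)) (hH0 : H0.Nonempty)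
    (σ : Ω → Equiv.Perm (Fin m))
    (hfix : ∀ ω, ∀ i, i ∉ H0 → σ ω i = i)
    (hunif : ∀ g : Equiv.Perm (Fin m), (∀ i, i ∉ H0 → g i = i) →
      μ {ω | σ ω = g} = ((Nat.factorial H0.card : ℝ≥0∞))⁻¹)
    (hindep : ∀ (g : Equiv.Perm (Fin m)) (j : Fin m) (c : ℝ),
      μ ({ω | σ ω = g} ∩ {ω | p j ω ≤ c}) = μ {ω | σ ω = g} * μ {ω | p j ω ≤ c})
    (havg : ∀ t ∈ Set.Icc (0:ℝ) 1,
      (1 / m : ℝ) * ∑ i ∈ H0, (μ {ω | p i ω ≤ t}).toReal ≤ t) :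
    ∀ i ∈ H0, ∀ α ∈ Set.Icc (0:ℝ) 1,
      (μ {ω | ((m : ℝ) / H0.card) * p (σ ω i) ω ≤ α}).toReal ≤ α := by
  intro i hi α hα
  obtain ⟨hα0, hα1⟩ := hα
  have hm₀ : 0 < H0.card := Finset.card_pos.mpr hH0
  have hm₀m : H0.card ≤ m := by
    simpa using Finset.card_le_univ H0
  have hmR : (0:ℝ) < m := by exact_mod_cast hm
  have hm₀R : (0:ℝ) < H0.card := by exact_mod_cast hm₀
  set t : ℝ := α * H0.card / m with htdef
  have ht0 : 0 ≤ t := by positivity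
  have ht1 : t ≤ 1 := by
    have hm₀mR : (H0.card : ℝ) ≤ m := by exact_mod_cast hm₀m
    have : t ≤ α := by
      rw [htdef, div_le_iff₀ hmR]
      nlinarith
    linarith
  set G : Finset (Equiv.Perm (Fin m)) :=
    Finset.univ.filter (fun g => ∀ k, k ∉ H0 → g k = k) with hGdef
  have hGmem : ∀ g : Equiv.Perm (Fin m), g ∈ G ↔ (∀ k, k ∉ H0 → g k = k) := by
    intro g; simp [hGdef]
  -- inclusion in the union over permutations
  have hsub : {ω | ((m:ℝ)/H0.card) * p (σ ω i) ω ≤ α}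
      ⊆ ⋃ g ∈ G, ({ω | σ ω = g} ∩ {ω | p (g i) ω ≤ t}) := by
    intro ω hω
    simp only [Set.mem_setOf_eq] at hω
    have hgG : σ ω ∈ G := (hGmem _).mpr (fun k hk => hfix ω k hk)
    refine Set.mem_biUnion hgG ⟨rfl, ?_⟩
    simp only [Set.mem_setOf_eq]
    rw [div_mul_eq_mul_div, div_le_iff₀ hm₀R] at hω
    rw [htdef, le_div_iff₀ hmR]
    nlinarith
  have hbound : μ {ω | ((m:ℝ)/H0.card) * p (σ ω i) ω ≤ α}
      ≤ ∑ g ∈ G, μ ({ω | σ ω = g} ∩ {ω | p (g i) ω ≤ t}) :=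
    le_trans (measure_mono hsub) (measure_biUnion_finset_le G _)
  set c : ℝ≥0∞ := ((Nat.factorial H0.card : ℝ≥0∞))⁻¹ with hcdef
  have hterm : ∀ g ∈ G, μ ({ω | σ ω = g} ∩ {ω | p (g i) ω ≤ t})
      = c * μ {ω | p (g i) ω ≤ t} := by
    intro g hg
    rw [hindep g (g i) t, hunif g ((hGmem g).mp hg)]
  have hmaps : ∀ g ∈ G, g i ∈ H0 := by
    intro g hg
    by_contra hgi
    have h1 : g (g i) = g i := (hGmem g).mp hg (g i) hgi
    have h2 : g i = i := g.injective h1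
    rw [h2] at hgi
    exact hgi hi
  -- group by the value of g i
  have hgroup : ∑ g ∈ G, μ ({ω | σ ω = g} ∩ {ω | p (g i) ω ≤ t})
      = ∑ j ∈ H0, ((G.filter (fun g => g i = j)).card : ℝ≥0∞)
          * (c * μ {ω | p j ω ≤ t}) := by
    rw [Finset.sum_congr rfl hterm,
      ← Finset.sum_fiberwise_of_maps_to hmaps (fun g => c * μ {ω | p (g i) ω ≤ t})]
    refine Finset.sum_congr rfl (fun j hj => ?_)
    rw [Finset.sum_congr rfl (fun g hg => ?_), Finset.sum_const, nsmul_eq_mul]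
    rw [(Finset.mem_filter.mp hg).2]
  -- fiber cardinality
  have hNcard : ∀ j ∈ H0, (G.filter (fun g => g i = j)).card * H0.card
      = (H0.card).factorial := by
    intro j hj
    have hfe : ∀ j' ∈ H0, (G.filter (fun g => g i = j')).card
        = (G.filter (fun g => g i = j)).card := by
      intro j' hj'
      simp only [hGdef, Finset.filter_filter]
      exact fiber_card_eq H0 i hj' hj
    have hsum : ∑ j' ∈ H0, (G.filter (fun g => g i = j')).card = G.card :=
      (Finset.card_eq_sum_card_fiberwise hmaps).symm
    rw [Finset.sum_congr rfl hfe, Finset.sum_const, smul_eq_mul] at hsum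
    rw [hGdef] at hsum
    rw [mul_comm, hsum, card_fixing]
  -- finiteness
  have hne : ∀ j ∈ H0, ((G.filter (fun g => g i = j)).card : ℝ≥0∞)
      * (c * μ {ω | p j ω ≤ t}) ≠ ∞ := by
    intro j hj
    apply ENNReal.mul_ne_top (ENNReal.natCast_ne_top _)
    apply ENNReal.mul_ne_top _ (measure_ne_top μ _)
    rw [hcdef]
    exact ENNReal.inv_ne_top.mpr (by exact_mod_cast (Nat.factorial_pos _).ne')
  calc (μ {ω | ((m:ℝ)/H0.card) * p (σ ω i) ω ≤ α}).toReal
      ≤ (∑ j ∈ H0, ((G.filter (fun g => g i = j)).card : ℝ≥0∞)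
          * (c * μ {ω | p j ω ≤ t})).toReal := by
        apply ENNReal.toReal_mono
        · exact (ENNReal.sum_ne_top).mpr hne
        · rw [← hgroup]; exact hbound
    _ = ∑ j ∈ H0, ((G.filter (fun g => g i = j)).card : ℝ)
          * (((H0.card).factorial : ℝ)⁻¹ * (μ {ω | p j ω ≤ t}).toReal) := by
        rw [ENNReal.toReal_sum hne]
        refine Finset.sum_congr rfl (fun j hj => ?_)
        rw [ENNReal.toReal_mul, ENNReal.toReal_mul, hcdef, ENNReal.toReal_inv]
        norm_num
    _ = ∑ j ∈ H0, (H0.card : ℝ)⁻¹ * (μ {ω | p j ω ≤ t}).toReal := by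
        refine Finset.sum_congr rfl (fun j hj => ?_)
        have hN := hNcard j hj
        have hNR : ((G.filter (fun g => g i = j)).card : ℝ) * H0.card
            = ((H0.card).factorial : ℝ) := by exact_mod_cast hN
        have hfacR : (0:ℝ) < (H0.card).factorial := by
          exact_mod_cast (Nat.factorial_pos _)
        rw [← mul_assoc]
        congr 1
        field_simp
        nlinarith
    _ = (H0.card : ℝ)⁻¹ * ∑ j ∈ H0, (μ {ω | p j ω ≤ t}).toReal := by
        rw [Finset.mul_sum]
    _ ≤ α := by
        have h1 := havg t ⟨ht0, ht1⟩
        have h2 : ∑ j ∈ H0, (μ {ω | p j ω ≤ t}).toReal ≤ m * t := by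
          rw [one_div, inv_mul_le_iff₀ hmR] at h1
          linarith [h1]
        have h3 : (H0.card : ℝ)⁻¹ * ∑ j ∈ H0, (μ {ω | p j ω ≤ t}).toReal
            ≤ (H0.card : ℝ)⁻¹ * (m * t) := by
          apply mul_le_mul_of_nonneg_left h2 (by positivity)
        have h4 : (H0.card : ℝ)⁻¹ * (m * t) = α := by
          rw [htdef]; field_simp
        linarith
end

section
/- Fix m ≥ 2 and 0 < q < 2/3. There exists a joint distribution P of p-values (p_1,...,p_m) on [0,1]^m, with the p_i independent, satisfying average significance level control (1/m)·Σ_{i=1}^m P(p_i ≤ t) ≤ t for all t ∈ [0,1] with H_0 = {1,...,m}, such that the Benjamini–Hochberg procedure at level q has FDR strictly greater than q (indeed FDR ≥ q + (q/(2m))²). -/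
open MeasureTheory ProbabilityTheory Set

/-- Number of p-values at most `t`. -/
noncomputable def rejCount (m : ℕ) (pv : Fin m → ℝ) (t : ℝ) : ℕ :=
  Set.ncard {i : Fin m | pv i ≤ t}

/-- The set of candidate cutoffs for the Benjamini–Hochberg procedure at level `q`:
those `t ∈ [0,1]` with `m·t/(R(t) ∨ 1) ≤ q`. -/
noncomputable def bhSet (m : ℕ) (q : ℝ) (pv : Fin m → ℝ) : Set ℝ :=
  {t : ℝ | t ∈ Set.Icc (0:ℝ) 1 ∧ (m : ℝ) * t / max (rejCount m pv t : ℝ) 1 ≤ q}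

/-- The Benjamini–Hochberg cutoff `t̂ = max{t : m·t/(R(t) ∨ 1) ≤ q}`. -/
noncomputable def bhCutoff (m : ℕ) (q : ℝ) (pv : Fin m → ℝ) : ℝ :=
  sSup (bhSet m q pv)

/-! ### Auxiliary lemmas about the BH procedure -/

lemma rejCount_le (m : ℕ) (pv : Fin m → ℝ) (t : ℝ) : rejCount m pv t ≤ m := by
  have := Set.ncard_le_ncard (Set.subset_univ {i : Fin m | pv i ≤ t}) Set.finite_univ
  simpa [rejCount, Set.ncard_univ] using this

lemma rejCount_mono (m : ℕ) (pv : Fin m → ℝ) {s t : ℝ} (h : s ≤ t) :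
    rejCount m pv s ≤ rejCount m pv t :=
  Set.ncard_le_ncard (fun _ hi => le_trans hi h) (Set.toFinite _)

lemma rejCount_eq_sum (m : ℕ) (pv : Fin m → ℝ) (t : ℝ) :
    rejCount m pv t = ∑ i : Fin m, if pv i ≤ t then 1 else 0 := by
  classical
  have h : {i : Fin m | pv i ≤ t} = ↑(Finset.univ.filter fun i => pv i ≤ t) := by
    ext i; simp
  rw [rejCount, h, Set.ncard_coe_finset, Finset.card_filter]

lemma bhSet_bddAbove (m : ℕ) (q : ℝ) (pv : Fin m → ℝ) : BddAbove (bhSet m q pv) :=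
  ⟨1, fun _ ht => ht.1.2⟩

lemma zero_mem_bhSet (m : ℕ) (q : ℝ) (hq0 : 0 ≤ q) (pv : Fin m → ℝ) : (0:ℝ) ∈ bhSet m q pv := by
  refine ⟨⟨le_refl 0, zero_le_one⟩, ?_⟩
  simp [hq0]

open scoped Classical in
/-- The FDR integrand for the BH procedure is the indicator of the event that some
`k ≥ 1` satisfies `R(qk/m) ≥ k`. -/
lemma bh_key (m : ℕ) (hm : 0 < m) (q : ℝ) (hq0 : 0 < q) (hq1 : q ≤ 1) (pv : Fin m → ℝ) :
    ((rejCount m pv (bhCutoff m q pv) : ℝ) / max (rejCount m pv (bhCutoff m q pv) : ℝ) 1)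
      = if ∃ k : ℕ, 1 ≤ k ∧ k ≤ rejCount m pv (q * k / m) then 1 else 0 := by
  have hbdd := bhSet_bddAbove m q pv
  have hmem0 := zero_mem_bhSet m q hq0.le pv
  have hmR : (0:ℝ) < (m:ℝ) := by exact_mod_cast hm
  set T := bhCutoff m q pv with hT
  set k := rejCount m pv T with hk
  by_cases hk0 : k = 0
  · rw [if_neg, hk0]
    · simp
    · rintro ⟨j, hj1, hjR⟩
      have hjm : j ≤ m := le_trans hjR (rejCount_le m pv _)
      have hjR' : (j:ℝ) ≤ (rejCount m pv (q * j / m) : ℝ) := by exact_mod_cast hjR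
      have hj1' : (1:ℝ) ≤ (j:ℝ) := by exact_mod_cast hj1
      have hmemj : q * j / m ∈ bhSet m q pv := by
        constructor
        · constructor
          · positivity
          · rw [div_le_one hmR]
            calc q * j ≤ 1 * j := by nlinarith
            _ ≤ m := by simpa using (by exact_mod_cast hjm : (j:ℝ) ≤ m)
        · have hMpos : (0:ℝ) < max (rejCount m pv (q * j / m) : ℝ) 1 :=
            lt_of_lt_of_le one_pos (le_max_right _ _)
          rw [div_le_iff₀ hMpos]
          have h1 : (m:ℝ) * (q * j / m) = q * j := by field_simp
          rw [h1]
          have : (j:ℝ) ≤ max (rejCount m pv (q * j / m) : ℝ) 1 :=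
            le_trans hjR' (le_max_left _ _)
          nlinarith
      have hTj : q * j / m ≤ T := le_csSup hbdd hmemj
      have : (1:ℕ) ≤ k := le_trans hj1 (le_trans hjR (rejCount_mono m pv hTj))
      omega
  · have hk1 : 1 ≤ k := Nat.one_le_iff_ne_zero.mpr hk0
    have hk1' : (1:ℝ) ≤ (k:ℝ) := by exact_mod_cast hk1
    have hub : ∀ t ∈ bhSet m q pv, t ≤ q * k / m := by
      intro t ht
      have htT : t ≤ T := le_csSup hbdd ht
      have hRt : (rejCount m pv t : ℝ) ≤ (k:ℝ) := by exact_mod_cast rejCount_mono m pv htT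
      have hMpos : (0:ℝ) < max (rejCount m pv t : ℝ) 1 :=
        lt_of_lt_of_le one_pos (le_max_right _ _)
      have h2 := (div_le_iff₀ hMpos).mp ht.2
      have hMk : max (rejCount m pv t : ℝ) 1 ≤ (k:ℝ) := max_le hRt hk1'
      rw [le_div_iff₀ hmR]
      nlinarith
    have hTk : T ≤ q * k / m := csSup_le ⟨0, hmem0⟩ hub
    have hD : ∃ j : ℕ, 1 ≤ j ∧ j ≤ rejCount m pv (q * j / m) :=
      ⟨k, hk1, rejCount_mono m pv hTk⟩
    rw [if_pos hD]
    rw [max_eq_left hk1', div_self (by linarith)]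

/-! ### The construction of the p-value distributions -/

/-- The uniform probability measure on `[0,1]`. -/
noncomputable def nuBH : Measure ℝ := volume.restrict (Set.Icc (0:ℝ) 1)

instance : IsProbabilityMeasure nuBH := by
  constructor
  rw [nuBH, Measure.restrict_apply_univ, Real.volume_Icc]
  norm_num

/-- Clamping to `[0,1]`. -/
noncomputable def clampBH (x : ℝ) : ℝ := max 0 (min x 1)

lemma clampBH_measurable : Measurable clampBH := by
  unfold clampBH
  exact measurable_const.max (measurable_id.min measurable_const)

lemma clampBH_eq {u : ℝ} (h0 : 0 ≤ u) (h1 : u ≤ 1) : clampBH u = u := by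
  rw [clampBH, min_eq_left h1, max_eq_right h0]

/-- The quantile transformations defining the counterexample p-values. -/
noncomputable def gBH (m : ℕ) (q : ℝ) (i : Fin m) (u : ℝ) : ℝ :=
  if (i : ℕ) = 0 then (if u ≤ 3*q/2 then u/m else 1)
  else if (i : ℕ) = 1 then (if u ≤ q/2 then 3*q/(2*m) + u/m else 1)
  else 1

lemma gBH_eq0 {m : ℕ} {q : ℝ} {i : Fin m} (hi : (i:ℕ) = 0) :
    gBH m q i = fun u => if u ≤ 3*q/2 then u/(m:ℝ) else 1 := by
  funext u; rw [gBH, if_pos hi]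

lemma gBH_eq1 {m : ℕ} {q : ℝ} {i : Fin m} (hi : (i:ℕ) = 1) :
    gBH m q i = fun u => if u ≤ q/2 then 3*q/(2*(m:ℝ)) + u/m else 1 := by
  funext u; rw [gBH, if_neg (by omega), if_pos hi]

lemma gBH_eq2 {m : ℕ} {q : ℝ} {i : Fin m} (hi0 : ¬((i:ℕ) = 0)) (hi1 : ¬((i:ℕ) = 1)) :
    gBH m q i = fun _ => (1:ℝ) := by
  funext u; rw [gBH, if_neg hi0, if_neg hi1]

lemma gBH_measurable (m : ℕ) (q : ℝ) (i : Fin m) : Measurable (gBH m q i) := by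
  unfold gBH
  split_ifs with h1 h2
  · exact Measurable.ite (measurableSet_le measurable_id measurable_const)
      (measurable_id.div_const _) measurable_const
  · exact Measurable.ite (measurableSet_le measurable_id measurable_const)
      (measurable_const.add (measurable_id.div_const _)) measurable_const
  · exact measurable_const

lemma vol_icc_iic (c : ℝ) : volume (Set.Icc (0:ℝ) 1 ∩ Set.Iic c) = ENNReal.ofReal (min 1 c) := by
  have h : Set.Icc (0:ℝ) 1 ∩ Set.Iic c = Set.Icc 0 (min 1 c) := by
    ext u
    simp only [Set.mem_inter_iff, Set.mem_Icc, Set.mem_Iic, le_min_iff]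
    tauto
  rw [h, Real.volume_Icc]
  norm_num

lemma nuBH_apply (S : Set ℝ) : nuBH S = volume (Set.Icc (0:ℝ) 1 ∩ S) := by
  rw [nuBH, Measure.restrict_apply' measurableSet_Icc, Set.inter_comm]

section Computations
variable {m : ℕ} (hm : 2 ≤ m) {q : ℝ} (hq0 : 0 < q) (hq : q < 2/3)

include hm hq0 hq in
lemma nu_g0_le {i : Fin m} (hi : (i:ℕ) = 0) {t : ℝ} (ht1 : t < 1) :
    nuBH {u : ℝ | gBH m q i (clampBH u) ≤ t} = ENNReal.ofReal (min 1 (min (3*q/2) (m*t))) := by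
  have hmR : (2:ℝ) ≤ (m:ℝ) := by exact_mod_cast hm
  rw [nuBH_apply, ← vol_icc_iic]
  congr 1
  ext u
  rw [gBH_eq0 hi]
  simp only [Set.mem_inter_iff, Set.mem_setOf_eq, Set.mem_Icc, Set.mem_Iic]
  constructor
  · rintro ⟨⟨hu0, hu1⟩, hg⟩
    rw [clampBH_eq hu0 hu1] at hg
    refine ⟨⟨hu0, hu1⟩, ?_⟩
    by_cases h : u ≤ 3*q/2
    · rw [if_pos h] at hg
      refine le_min h ?_
      rw [div_le_iff₀ (by linarith : (0:ℝ) < (m:ℝ))] at hg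
      linarith
    · rw [if_neg h] at hg; linarith
  · rintro ⟨⟨hu0, hu1⟩, hum⟩
    rw [clampBH_eq hu0 hu1]
    refine ⟨⟨hu0, hu1⟩, ?_⟩
    have h1 : u ≤ 3*q/2 := le_trans hum (min_le_left _ _)
    rw [if_pos h1, div_le_iff₀ (by linarith : (0:ℝ) < (m:ℝ))]
    linarith [le_trans hum (min_le_right _ _)]

include hm hq0 hq in
lemma nu_g1_le {i : Fin m} (hi : (i:ℕ) = 1) {t : ℝ} (ht1 : t < 1) :
    nuBH {u : ℝ | gBH m q i (clampBH u) ≤ t}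
      = ENNReal.ofReal (min 1 (min (q/2) (m*t - 3*q/2))) := by
  have hmR : (2:ℝ) ≤ (m:ℝ) := by exact_mod_cast hm
  have hmpos : (0:ℝ) < (m:ℝ) := by linarith
  rw [nuBH_apply, ← vol_icc_iic]
  congr 1
  ext u
  rw [gBH_eq1 hi]
  simp only [Set.mem_inter_iff, Set.mem_setOf_eq, Set.mem_Icc, Set.mem_Iic]
  constructor
  · rintro ⟨⟨hu0, hu1⟩, hg⟩
    rw [clampBH_eq hu0 hu1] at hg
    refine ⟨⟨hu0, hu1⟩, ?_⟩
    by_cases h : u ≤ q/2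
    · rw [if_pos h] at hg
      refine le_min h ?_
      rw [div_add_div _ _ (by linarith) (by linarith), div_le_iff₀ (by positivity)] at hg
      nlinarith
    · rw [if_neg h] at hg; linarith
  · rintro ⟨⟨hu0, hu1⟩, hum⟩
    rw [clampBH_eq hu0 hu1]
    refine ⟨⟨hu0, hu1⟩, ?_⟩
    have h1 : u ≤ q/2 := le_trans hum (min_le_left _ _)
    rw [if_pos h1, div_add_div _ _ (by linarith) (by linarith), div_le_iff₀ (by positivity)]
    have := le_trans hum (min_le_right _ _)
    nlinarith

lemma nu_gother_le {i : Fin m} (hi0 : ¬((i:ℕ) = 0)) (hi1 : ¬((i:ℕ) = 1)) {t : ℝ} (ht1 : t < 1) :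
    nuBH {u : ℝ | gBH m q i (clampBH u) ≤ t} = 0 := by
  have h : {u : ℝ | gBH m q i (clampBH u) ≤ t} = ∅ := by
    ext u
    rw [gBH_eq2 hi0 hi1]
    simp only [Set.mem_setOf_eq, Set.mem_empty_iff_false, iff_false, not_le]
    linarith
  rw [h]
  simp

include hm hq0 hq in
lemma nu_g0_Ioc {i : Fin m} (hi : (i:ℕ) = 0) :
    nuBH {u : ℝ | gBH m q i (clampBH u) ∈ Set.Ioc (q/m) (3*q/(2*m))} = ENNReal.ofReal (q/2) := by
  have hmR : (2:ℝ) ≤ (m:ℝ) := by exact_mod_cast hm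
  have hmpos : (0:ℝ) < (m:ℝ) := by linarith
  rw [nuBH_apply]
  have h : Set.Icc (0:ℝ) 1 ∩ {u : ℝ | gBH m q i (clampBH u) ∈ Set.Ioc (q/m) (3*q/(2*m))}
      = Set.Ioc q (3*q/2) := by
    ext u
    rw [gBH_eq0 hi]
    simp only [Set.mem_inter_iff, Set.mem_Icc, Set.mem_setOf_eq, Set.mem_Ioc]
    constructor
    · rintro ⟨⟨hu0, hu1⟩, hg⟩
      rw [clampBH_eq hu0 hu1] at hg
      by_cases h : u ≤ 3*q/2
      · rw [if_pos h] at hg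
        obtain ⟨hg1, hg2⟩ := hg
        constructor
        · rw [div_lt_div_iff₀ hmpos hmpos] at hg1; nlinarith
        · exact h
      · rw [if_neg h] at hg
        exfalso
        have h2 := hg.2
        rw [le_div_iff₀ (by linarith : (0:ℝ) < 2*(m:ℝ))] at h2
        nlinarith
    · rintro ⟨hq1, hq2⟩
      have hu0 : 0 ≤ u := by linarith
      have hu1 : u ≤ 1 := by linarith
      refine ⟨⟨hu0, hu1⟩, ?_⟩
      rw [clampBH_eq hu0 hu1, if_pos hq2]
      constructor
      · rw [div_lt_div_iff₀ hmpos hmpos]; nlinarith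
      · rw [div_le_div_iff₀ hmpos (by linarith : (0:ℝ) < 2*(m:ℝ))]; nlinarith
  rw [h, Real.volume_Ioc]
  congr 1
  ring

end Computations

/-- Marginals of the product of copies of `nuBH`. -/
lemma pi_marg {m : ℕ} (i : Fin m) (T : Set ℝ) :
    Measure.pi (fun _ : Fin m => nuBH) (Function.eval i ⁻¹' T) = nuBH T := by
  classical
  rw [Set.eval_preimage, Measure.pi_pi]
  have h : ∀ j : Fin m, nuBH (Function.update (fun _ : Fin m => (Set.univ : Set ℝ)) i T j)
      = Function.update (fun _ : Fin m => (1:ENNReal)) i (nuBH T) j := by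
    intro j
    by_cases hj : j = i
    · subst hj; simp
    · simp [Function.update_of_ne hj]
  simp_rw [h]
  rw [Finset.prod_update_of_mem (Finset.mem_univ i)]
  simp

/-- Functions of distinct coordinates are independent under a product measure. -/
lemma indep_pi {m : ℕ} (h : Fin m → ℝ → ℝ) :
    iIndepFun (fun i (ω : Fin m → ℝ) => h i (ω i))
      (Measure.pi (fun _ : Fin m => nuBH)) := by
  classical
  rw [iIndepFun_iff_measure_inter_preimage_eq_mul]
  intro S sets _
  have hset : (⋂ i ∈ S, (fun ω : Fin m → ℝ => h i (ω i)) ⁻¹' sets i)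
      = Set.pi Set.univ (fun j => if j ∈ S then h j ⁻¹' sets j else Set.univ) := by
    ext ω
    simp only [Set.mem_iInter, Set.mem_preimage, Set.mem_pi, Set.mem_univ, true_implies]
    constructor
    · intro H j
      split_ifs with hj
      · exact H j hj
      · exact Set.mem_univ _
    · intro H i hi
      have := H i
      rwa [if_pos hi] at this
  rw [hset, Measure.pi_pi]
  have h2 : ∀ j : Fin m, nuBH (if j ∈ S then h j ⁻¹' sets j else Set.univ)
      = if j ∈ S then nuBH (h j ⁻¹' sets j) else 1 := by
    intro j; split_ifs <;> simp
  simp_rw [h2]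
  rw [Finset.prod_ite_mem Finset.univ S (fun j => nuBH (h j ⁻¹' sets j)), Finset.univ_inter]
  refine Finset.prod_congr rfl fun i _ => ?_
  rw [← pi_marg i (h i ⁻¹' sets i)]
  rfl

/-- Counterexample: for `m ≥ 2` and `0 < q < 2/3`, there are independent p-values
satisfying average significance level control (with all hypotheses null) for which the
Benjamini–Hochberg procedure at level `q` has FDR at least `q + (q/(2m))²` (so FDR > q). -/
theorem stmt4 (m : ℕ) (hm : 2 ≤ m) (q : ℝ) (hq0 : 0 < q) (hq : q < 2/3) :
    ∃ (Ω : Type) (_ : MeasurableSpace Ω) (μ : Measure Ω) (_ : IsProbabilityMeasure μ)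
      (p : Fin m → Ω → ℝ),
      (∀ i, Measurable (p i)) ∧
      (∀ i ω, p i ω ∈ Set.Icc (0:ℝ) 1) ∧
      iIndepFun p μ ∧
      (∀ t ∈ Set.Icc (0:ℝ) 1,
        (1 / m : ℝ) * ∑ i, (μ {ω | p i ω ≤ t}).toReal ≤ t) ∧
      q + (q / (2 * m))^2 ≤
        ∫ ω, (rejCount m (fun i => p i ω) (bhCutoff m q (fun i => p i ω)) : ℝ) /
          max (rejCount m (fun i => p i ω) (bhCutoff m q (fun i => p i ω)) : ℝ) 1 ∂μ := by
  classical
  have hmR : (2:ℝ) ≤ (m:ℝ) := by exact_mod_cast hm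
  have hmpos : (0:ℝ) < (m:ℝ) := by linarith
  have hpmeas : ∀ i : Fin m, Measurable (fun ω : Fin m → ℝ => gBH m q i (clampBH (ω i))) :=
    fun i => (gBH_measurable m q i).comp (clampBH_measurable.comp (measurable_pi_apply i))
  refine ⟨(Fin m → ℝ), inferInstance, Measure.pi (fun _ : Fin m => nuBH), inferInstance,
    fun i ω => gBH m q i (clampBH (ω i)), hpmeas, ?_, ?_, ?_, ?_⟩
  · -- values in [0,1]
    intro i ω
    have hc0 : 0 ≤ clampBH (ω i) := le_max_left _ _
    have hc1 : clampBH (ω i) ≤ 1 := by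
      rw [clampBH]; exact max_le (by linarith) (min_le_right _ _)
    unfold gBH
    dsimp only
    split_ifs
    · constructor
      · positivity
      · rw [div_le_one hmpos]; linarith
    · exact ⟨zero_le_one, le_refl 1⟩
    · constructor
      · positivity
      · have h3 : 3*q/(2*(m:ℝ)) + clampBH (ω i)/m ≤ 3*q/(2*m) + (q/2)/m := by
          gcongr
        have h2 : 3*q/(2*(m:ℝ)) + (q/2)/m ≤ 1 := by
          rw [div_add_div _ _ (by linarith) (by linarith), div_le_one (by positivity)]
          nlinarith
        linarith
    · exact ⟨zero_le_one, le_refl 1⟩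
    · exact ⟨zero_le_one, le_refl 1⟩
  · -- independence
    exact indep_pi (fun i => gBH m q i ∘ clampBH)
  · -- average significance control
    intro t ⟨ht0, ht1⟩
    rcases eq_or_lt_of_le ht1 with h1 | h1
    · -- t = 1
      subst h1
      have hsumle : ∑ i : Fin m,
          ((Measure.pi (fun _ : Fin m => nuBH))
            {ω : Fin m → ℝ | gBH m q i (clampBH (ω i)) ≤ 1}).toReal ≤ ∑ _i : Fin m, (1:ℝ) := by
        refine Finset.sum_le_sum fun i _ => ?_
        rw [← ENNReal.toReal_one]
        exact ENNReal.toReal_mono ENNReal.one_ne_top prob_le_one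
      have hcard : ∑ _i : Fin m, (1:ℝ) = m := by
        rw [Finset.sum_const, Finset.card_univ, Fintype.card_fin]; simp
      calc (1 / m : ℝ) * ∑ i : Fin m,
          ((Measure.pi (fun _ : Fin m => nuBH))
            {ω : Fin m → ℝ | gBH m q i (clampBH (ω i)) ≤ 1}).toReal
          ≤ (1 / m : ℝ) * ∑ _i : Fin m, (1:ℝ) :=
            mul_le_mul_of_nonneg_left hsumle (by positivity)
        _ = 1 := by rw [hcard]; field_simp
    · -- t < 1
      set i0 : Fin m := ⟨0, by omega⟩ with hi0
      set i1 : Fin m := ⟨1, by omega⟩ with hi1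
      have hne : i0 ≠ i1 := by
        rw [hi0, hi1]; intro h; exact absurd (congrArg Fin.val h) (by norm_num)
      have hmarg : ∀ i : Fin m, (Measure.pi (fun _ : Fin m => nuBH))
          {ω : Fin m → ℝ | gBH m q i (clampBH (ω i)) ≤ t}
          = nuBH {u : ℝ | gBH m q i (clampBH u) ≤ t} :=
        fun i => pi_marg i {u : ℝ | gBH m q i (clampBH u) ≤ t}
      have hsum : ∑ i : Fin m, ((Measure.pi (fun _ : Fin m => nuBH))
            {ω : Fin m → ℝ | gBH m q i (clampBH (ω i)) ≤ t}).toReal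
          = ((Measure.pi (fun _ : Fin m => nuBH))
              {ω : Fin m → ℝ | gBH m q i0 (clampBH (ω i0)) ≤ t}).toReal
            + ((Measure.pi (fun _ : Fin m => nuBH))
              {ω : Fin m → ℝ | gBH m q i1 (clampBH (ω i1)) ≤ t}).toReal := by
        rw [← Finset.sum_subset (Finset.subset_univ {i0, i1})]
        · rw [Finset.sum_pair hne]
        · intro i _ hi
          have hv0 : ¬((i:ℕ) = 0) := by
            intro h; apply hi; simp only [Finset.mem_insert, Finset.mem_singleton]
            left; exact Fin.ext h
          have hv1 : ¬((i:ℕ) = 1) := by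
            intro h; apply hi; simp only [Finset.mem_insert, Finset.mem_singleton]
            right; exact Fin.ext h
          rw [hmarg i, nu_gother_le hv0 hv1 h1]
          simp
      rw [hsum, hmarg i0, hmarg i1, nu_g0_le hm hq0 hq rfl h1, nu_g1_le hm hq0 hq rfl h1,
        ENNReal.toReal_ofReal', ENNReal.toReal_ofReal']
      set a := max (min 1 (min (3*q/2) (m*t))) 0 with ha
      set b := max (min 1 (min (q/2) (m*t - 3*q/2))) 0 with hb
      have hab : a + b ≤ m * t := by
        have hmt : 0 ≤ (m:ℝ) * t := by positivity
        rcases le_total ((m:ℝ)*t) (3*q/2) with h | h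
        · have ha' : a ≤ m*t := by
            rw [ha]
            refine max_le ?_ hmt
            exact le_trans (min_le_right _ _) (min_le_right _ _)
          have hb' : b ≤ 0 := by
            rw [hb]
            refine max_le ?_ (le_refl 0)
            refine le_trans (min_le_right _ _) ?_
            refine le_trans (min_le_right _ _) ?_
            linarith
          linarith
        · have ha' : a ≤ 3*q/2 := by
            rw [ha]
            refine max_le ?_ (by linarith)
            exact le_trans (min_le_right _ _) (min_le_left _ _)
          have hb' : b ≤ m*t - 3*q/2 := by
            rw [hb]
            refine max_le ?_ (by linarith)
            exact le_trans (min_le_right _ _) (min_le_right _ _)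
          linarith
      calc (1 / m : ℝ) * (a + b) ≤ (1 / m : ℝ) * (m * t) :=
            mul_le_mul_of_nonneg_left hab (by positivity)
        _ = t := by field_simp
  · -- the FDR bound
    set i0 : Fin m := ⟨0, by omega⟩ with hi0
    set i1 : Fin m := ⟨1, by omega⟩ with hi1
    have hne : i0 ≠ i1 := by
      rw [hi0, hi1]; intro h; exact absurd (congrArg Fin.val h) (by norm_num)
    -- the event E
    set E : Set (Fin m → ℝ) := {ω | ∃ k : ℕ, 1 ≤ k ∧
      k ≤ rejCount m (fun i => gBH m q i (clampBH (ω i))) (q * k / m)} with hE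
    -- the integrand is the indicator of E
    have hintegrand : (fun ω : Fin m → ℝ =>
          (rejCount m (fun i => gBH m q i (clampBH (ω i)))
            (bhCutoff m q (fun i => gBH m q i (clampBH (ω i)))) : ℝ) /
          max (rejCount m (fun i => gBH m q i (clampBH (ω i)))
            (bhCutoff m q (fun i => gBH m q i (clampBH (ω i)))) : ℝ) 1)
        = E.indicator (fun _ => (1:ℝ)) := by
      funext ω
      rw [bh_key m (by omega) q hq0 (by linarith) (fun i => gBH m q i (clampBH (ω i)))]
      by_cases hω : ∃ k : ℕ, 1 ≤ k ∧
          k ≤ rejCount m (fun i => gBH m q i (clampBH (ω i))) (q * k / m)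
      · rw [if_pos hω, Set.indicator_of_mem (show ω ∈ E from hω)]
      · rw [if_neg hω, Set.indicator_of_notMem (show ω ∉ E from hω)]
    -- E is measurable
    have hEmeas : MeasurableSet E := by
      have hEeq : E = ⋃ k ∈ Finset.Icc 1 m,
          {ω : Fin m → ℝ | k ≤ rejCount m (fun i => gBH m q i (clampBH (ω i))) (q * k / m)} := by
        ext ω
        simp only [hE, Set.mem_setOf_eq, Set.mem_iUnion, Finset.mem_Icc, exists_prop]
        constructor
        · rintro ⟨k, hk1, hk2⟩
          exact ⟨k, ⟨hk1, le_trans hk2 (rejCount_le m _ _)⟩, hk2⟩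
        · rintro ⟨k, ⟨hk1, _⟩, hk2⟩
          exact ⟨k, hk1, hk2⟩
      rw [hEeq]
      refine MeasurableSet.biUnion (Finset.Icc 1 m).countable_toSet fun k _ => ?_
      have hF : Measurable (fun ω : Fin m → ℝ =>
          rejCount m (fun i => gBH m q i (clampBH (ω i))) (q * k / m)) := by
        have hFeq : (fun ω : Fin m → ℝ =>
            rejCount m (fun i => gBH m q i (clampBH (ω i))) (q * k / m))
            = fun ω : Fin m → ℝ =>
              ∑ i : Fin m, if gBH m q i (clampBH (ω i)) ≤ q * k / m then 1 else 0 := by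
          funext ω
          rw [rejCount_eq_sum]
        rw [hFeq]
        refine Finset.measurable_sum _ fun i _ => ?_
        exact Measurable.ite (measurableSet_le (hpmeas i) measurable_const)
          measurable_const measurable_const
      exact hF measurableSet_Ici
    -- the two events A and B
    set A : Set (Fin m → ℝ) :=
      (fun ω : Fin m → ℝ => gBH m q i0 (clampBH (ω i0))) ⁻¹' (Set.Iic (q/m)) with hA
    set B : Set (Fin m → ℝ) :=
      (fun ω : Fin m → ℝ => gBH m q i0 (clampBH (ω i0))) ⁻¹' (Set.Ioc (q/m) (3*q/(2*m)))
      ∩ (fun ω : Fin m → ℝ => gBH m q i1 (clampBH (ω i1))) ⁻¹' (Set.Iic (2*q/m)) with hB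
    have hABsub : A ∪ B ⊆ E := by
      rintro ω (hωA | ⟨hωB1, hωB2⟩)
      · refine ⟨1, le_refl 1, ?_⟩
        have h01 : q * ((1:ℕ):ℝ) / m = q / m := by push_cast; ring
        rw [h01]
        have hmem : i0 ∈ {i : Fin m | gBH m q i (clampBH (ω i)) ≤ q/m} := hωA
        rw [rejCount]
        exact (Set.ncard_pos (Set.toFinite _)).mpr ⟨i0, hmem⟩
      · refine ⟨2, by norm_num, ?_⟩
        have h2q : q * ((2:ℕ):ℝ) / m = 2*q/m := by push_cast; ring
        rw [h2q]
        have hle : 3*q/(2*(m:ℝ)) ≤ 2*q/m := by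
          rw [div_le_div_iff₀ (by linarith : (0:ℝ) < 2*(m:ℝ)) hmpos]
          nlinarith
        have hsub : ({i0, i1} : Set (Fin m))
            ⊆ {i : Fin m | gBH m q i (clampBH (ω i)) ≤ 2*q/m} := by
          rintro i (rfl | rfl)
          · exact le_trans hωB1.2 hle
          · exact hωB2
        rw [rejCount]
        calc 2 = ({i0, i1} : Set (Fin m)).ncard := (Set.ncard_pair hne).symm
          _ ≤ _ := Set.ncard_le_ncard hsub (Set.toFinite _)
    -- disjointness and measures
    have hBmeas : MeasurableSet B :=
      ((hpmeas i0) measurableSet_Ioc).inter ((hpmeas i1) measurableSet_Iic)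
    have hdisj : Disjoint A B := by
      rw [Set.disjoint_left]
      intro ω hωA hωB
      exact absurd hωA (not_le.mpr hωB.1.1)
    have hμA : (Measure.pi (fun _ : Fin m => nuBH)) A = ENNReal.ofReal q := by
      have h := pi_marg i0 {u : ℝ | gBH m q i0 (clampBH u) ≤ q/m}
      rw [hA]
      rw [show ((fun ω : Fin m → ℝ => gBH m q i0 (clampBH (ω i0))) ⁻¹' (Set.Iic (q/m)))
          = Function.eval i0 ⁻¹' {u : ℝ | gBH m q i0 (clampBH u) ≤ q/m} from rfl]
      rw [h, nu_g0_le hm hq0 hq rfl (by rw [div_lt_one hmpos]; linarith)]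
      congr 1
      rw [show (m:ℝ) * (q/m) = q by field_simp]
      rw [min_eq_right (by linarith : q ≤ 3*q/2), min_eq_right (by linarith : q ≤ 1)]
    have hμB : (Measure.pi (fun _ : Fin m => nuBH)) B
        = ENNReal.ofReal (q/2) * ENNReal.ofReal (q/2) := by
      have hindep : IndepFun (fun ω : Fin m → ℝ => gBH m q i0 (clampBH (ω i0)))
          (fun ω : Fin m → ℝ => gBH m q i1 (clampBH (ω i1)))
          (Measure.pi (fun _ : Fin m => nuBH)) :=
        (indep_pi (fun i => gBH m q i ∘ clampBH)).indepFun hne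
      rw [hB, hindep.measure_inter_preimage_eq_mul _ _ measurableSet_Ioc measurableSet_Iic]
      have hB1 : (Measure.pi (fun _ : Fin m => nuBH))
          ((fun ω : Fin m → ℝ => gBH m q i0 (clampBH (ω i0))) ⁻¹' (Set.Ioc (q/m) (3*q/(2*m))))
          = ENNReal.ofReal (q/2) := by
        rw [show ((fun ω : Fin m → ℝ => gBH m q i0 (clampBH (ω i0)))
              ⁻¹' (Set.Ioc (q/m) (3*q/(2*m))))
            = Function.eval i0 ⁻¹' {u : ℝ | gBH m q i0 (clampBH u) ∈ Set.Ioc (q/m) (3*q/(2*m))}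
            from rfl]
        rw [pi_marg i0 _, nu_g0_Ioc hm hq0 hq rfl]
      have hB2 : (Measure.pi (fun _ : Fin m => nuBH))
          ((fun ω : Fin m → ℝ => gBH m q i1 (clampBH (ω i1))) ⁻¹' (Set.Iic (2*q/m)))
          = ENNReal.ofReal (q/2) := by
        have h2q1 : 2*q/(m:ℝ) < 1 := by
          rw [div_lt_one hmpos]; nlinarith
        rw [show ((fun ω : Fin m → ℝ => gBH m q i1 (clampBH (ω i1))) ⁻¹' (Set.Iic (2*q/m)))
            = Function.eval i1 ⁻¹' {u : ℝ | gBH m q i1 (clampBH u) ≤ 2*q/m} from rfl]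
        rw [pi_marg i1 _, nu_g1_le hm hq0 hq rfl h2q1]
        congr 1
        rw [show (m:ℝ) * (2*q/m) - 3*q/2 = q/2 by field_simp; ring]
        rw [min_self, min_eq_right (by linarith : q/2 ≤ 1)]
      rw [hB1, hB2]
    -- put everything together
    rw [hintegrand]
    have hind1 : E.indicator (fun _ => (1:ℝ)) = E.indicator (1 : (Fin m → ℝ) → ℝ) := rfl
    rw [hind1, integral_indicator_one hEmeas]
    have hμAB : (Measure.pi (fun _ : Fin m => nuBH)) (A ∪ B)
        = ENNReal.ofReal (q + q/2 * (q/2)) := by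
      rw [measure_union hdisj hBmeas, hμA, hμB, ← ENNReal.ofReal_mul (by linarith : (0:ℝ) ≤ q/2),
        ← ENNReal.ofReal_add hq0.le (by positivity)]
    have hstep : ((Measure.pi (fun _ : Fin m => nuBH)) (A ∪ B)).toReal
        ≤ ((Measure.pi (fun _ : Fin m => nuBH)) E).toReal :=
      ENNReal.toReal_mono (measure_ne_top _ E) (measure_mono hABsub)
    have hval : ((Measure.pi (fun _ : Fin m => nuBH)) (A ∪ B)).toReal = q + q/2 * (q/2) := by
      rw [hμAB, ENNReal.toReal_ofReal (by positivity)]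
    have hsmall : q + (q / (2 * m))^2 ≤ q + q/2 * (q/2) := by
      have h1 : q / (2*(m:ℝ)) ≤ q/2 := by
        rw [div_le_div_iff₀ (by linarith : (0:ℝ) < 2*(m:ℝ)) (by norm_num : (0:ℝ) < 2)]
        nlinarith
      have h2 : (q / (2*(m:ℝ)))^2 ≤ (q/2)^2 := by
        apply pow_le_pow_left₀ (by positivity) h1
      nlinarith
    rw [measureReal_def]
    linarith
end

section
/- Suppose p_1,...,p_m are independent [0,1]-valued random variables and H_0 ⊆ {1,...,m} satisfies average significance level control: (1/m)·Σ_{i∈H_0} P(p_i ≤ t) ≤ t. Fix t ∈ [0,1]. Let V(t) = #{i ∈ H_0 : p_i ≤ t}, S(t) = #{i ∉ H_0 : p_i ≤ t}, R(t) = V(t) + S(t). Then E[m·t/(R(t) ∨ 1)] ≥ E[V(t)/(R(t) ∨ 1)]; that is, the Benjamini–Hochberg estimate FDR̂(t) = m·t/(R(t) ∨ 1) is an upwardly biased estimate of the FDR of the fixed rejection region procedure. -/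
open MeasureTheory ProbabilityTheory Set

/-- Under independent p-values satisfying average significance level control, the
Benjamini–Hochberg estimate `m·t/(R(t) ∨ 1)` is an upwardly biased estimate of the FDR
`E[V(t)/(R(t) ∨ 1)]` of the fixed rejection region procedure at cutoff `t`. -/
theorem stmt8 {Ω : Type} [MeasurableSpace Ω] (μ : Measure Ω) [IsProbabilityMeasure μ]
    (m : ℕ) (hm : 0 < m) (p : Fin m → Ω → ℝ)
    (hmeas : ∀ i, Measurable (p i))
    (hp : ∀ i ω, p i ω ∈ Set.Icc (0:ℝ) 1)
    (hindep : iIndepFun p μ)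
    (H0 : Finset (Fin m))
    (havg : ∀ s ∈ Set.Icc (0:ℝ) 1,
      (1 / m : ℝ) * ∑ i ∈ H0, (μ {ω | p i ω ≤ s}).toReal ≤ s)
    (t : ℝ) (ht : t ∈ Set.Icc (0:ℝ) 1) :
    ∫ ω, (Set.ncard {i | i ∈ H0 ∧ p i ω ≤ t} : ℝ) /
        max ((Set.ncard {i | i ∈ H0 ∧ p i ω ≤ t} : ℝ) +
          (Set.ncard {i | i ∉ H0 ∧ p i ω ≤ t} : ℝ)) 1 ∂μ ≤
      ∫ ω, (m : ℝ) * t /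
        max ((Set.ncard {i | i ∈ H0 ∧ p i ω ≤ t} : ℝ) +
          (Set.ncard {i | i ∉ H0 ∧ p i ω ≤ t} : ℝ)) 1 ∂μ := by
  classical
  obtain ⟨ht0, ht1⟩ := ht
  -- notation
  set ind : Fin m → Ω → ℝ := fun i ω => if p i ω ≤ t then 1 else 0 with hind_def
  set N : Ω → ℕ := fun ω => (Finset.univ.filter fun j => p j ω ≤ t).card with hN_def
  set Ni : Fin m → Ω → ℕ :=
    fun i ω => ((Finset.univ.erase i).filter fun j => p j ω ≤ t).card with hNi_def
  set D : Ω → ℝ := fun ω => max (N ω : ℝ) 1 with hD_def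
  -- card of filters as sums of indicators
  have hcard : ∀ (s : Finset (Fin m)) ω,
      ((s.filter fun j => p j ω ≤ t).card : ℝ) = ∑ j ∈ s, ind j ω := by
    intro s ω
    rw [Finset.card_filter]
    push_cast
    rfl
  have hmeas_ind : ∀ i, Measurable (ind i) := fun i =>
    Measurable.ite (measurableSet_le (hmeas i) measurable_const)
      measurable_const measurable_const
  have hmeas_card : ∀ s : Finset (Fin m),
      Measurable fun ω => ((s.filter fun j => p j ω ≤ t).card : ℝ) := by
    intro s
    simp only [hcard]
    exact Finset.measurable_sum _ fun i _ => hmeas_ind i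
  have measD : Measurable D := (hmeas_card Finset.univ).max measurable_const
  have hD1 : ∀ ω, (1:ℝ) ≤ D ω := fun ω => le_max_right _ _
  have hDpos : ∀ ω, (0:ℝ) < D ω := fun ω => lt_of_lt_of_le one_pos (hD1 ω)
  -- integrability helper
  have hint : ∀ (f : Ω → ℝ), Measurable f → (∀ ω, |f ω| ≤ 1) → Integrable f μ := by
    intro f hf hb
    exact (integrable_const (1:ℝ)).mono' hf.aestronglyMeasurable
      (Filter.Eventually.of_forall fun ω => by simpa using hb ω)
  have hind01 : ∀ i ω, 0 ≤ ind i ω ∧ ind i ω ≤ 1 := by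
    intro i ω
    simp only [hind_def]
    split <;> norm_num
  -- the reciprocal functions
  set g : Fin m → Ω → ℝ := fun i ω => 1 / ((Ni i ω : ℝ) + 1) with hg_def
  set invD : Ω → ℝ := fun ω => 1 / D ω with hinvD_def
  have hNipos : ∀ i ω, (0:ℝ) < (Ni i ω : ℝ) + 1 := by
    intro i ω; positivity
  have hmeas_g : ∀ i, Measurable (g i) := by
    intro i
    simp only [hg_def, one_div]
    exact ((hmeas_card (Finset.univ.erase i)).add measurable_const).inv
  have hmeas_invD : Measurable invD := by
    simp only [hinvD_def, one_div]; exact measD.inv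
  have hg_bd : ∀ i ω, |g i ω| ≤ 1 := by
    intro i ω
    rw [abs_of_nonneg (by positivity)]
    rw [div_le_one (hNipos i ω)]
    have : (0:ℝ) ≤ (Ni i ω : ℝ) := by positivity
    linarith
  have hinvD_bd : ∀ ω, |invD ω| ≤ 1 := by
    intro ω
    rw [abs_of_nonneg (by positivity)]
    rw [div_le_one (hDpos ω)]
    exact hD1 ω
  have hint_g : ∀ i, Integrable (g i) μ := fun i => hint _ (hmeas_g i) (hg_bd i)
  have hint_invD : Integrable invD μ := hint _ hmeas_invD hinvD_bd
  have hint_inddiv : ∀ i, Integrable (fun ω => ind i ω / D ω) μ := by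
    intro i
    refine hint _ ((hmeas_ind i).div measD) fun ω => ?_
    rw [abs_div, div_le_one (lt_of_lt_of_le one_pos ((hD1 ω).trans (le_abs_self _)))]
    calc |ind i ω| ≤ 1 := by rw [abs_of_nonneg (hind01 i ω).1]; exact (hind01 i ω).2
      _ ≤ D ω := hD1 ω
      _ ≤ |D ω| := le_abs_self _
  have hint_indg : ∀ i, Integrable (fun ω => ind i ω * g i ω) μ := by
    intro i
    refine hint _ ((hmeas_ind i).mul (hmeas_g i)) fun ω => ?_
    rw [abs_mul]
    calc |ind i ω| * |g i ω| ≤ 1 * 1 := by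
          refine mul_le_mul ?_ (hg_bd i ω) (abs_nonneg _) zero_le_one
          rw [abs_of_nonneg (hind01 i ω).1]; exact (hind01 i ω).2
      _ = 1 := by ring
  -- N ≤ Ni + 1
  have hNle : ∀ i ω, N ω ≤ Ni i ω + 1 := by
    intro i ω
    have hsub : (Finset.univ.filter fun j => p j ω ≤ t) ⊆
        insert i ((Finset.univ.erase i).filter fun j => p j ω ≤ t) := by
      intro j hj
      rcases eq_or_ne j i with h | h
      · simp [h]
      · simp only [Finset.mem_filter, Finset.mem_univ, true_and] at hj
        simp [Finset.mem_insert, Finset.mem_erase, h, hj]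
    calc N ω ≤ (insert i ((Finset.univ.erase i).filter fun j => p j ω ≤ t)).card :=
          Finset.card_le_card hsub
      _ ≤ Ni i ω + 1 := Finset.card_insert_le _ _
  have hDle : ∀ i ω, D ω ≤ (Ni i ω : ℝ) + 1 := by
    intro i ω
    refine max_le ?_ ?_
    · exact_mod_cast hNle i ω
    · have : (0:ℝ) ≤ (Ni i ω : ℝ) := by positivity
      linarith
  -- key pointwise identity
  have hkey : ∀ i ω, ind i ω / D ω = ind i ω * g i ω := by
    intro i ω
    by_cases h : p i ω ≤ t
    · have hset : (Finset.univ.filter fun j => p j ω ≤ t) =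
          insert i ((Finset.univ.erase i).filter fun j => p j ω ≤ t) := by
        ext j
        simp only [Finset.mem_filter, Finset.mem_univ, true_and, Finset.mem_insert,
          Finset.mem_erase]
        constructor
        · intro hj
          rcases eq_or_ne j i with hji | hji
          · exact Or.inl hji
          · exact Or.inr ⟨⟨hji, trivial⟩, hj⟩
        · rintro (hj | hj)
          · rw [hj]; exact h
          · exact hj.2
      have hNeq : N ω = Ni i ω + 1 := by
        show (Finset.univ.filter fun j => p j ω ≤ t).card = _
        rw [hset, Finset.card_insert_of_notMem (by simp)]
      have h1le : (1:ℝ) ≤ (Ni i ω : ℝ) + 1 := by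
        have : (0:ℝ) ≤ (Ni i ω : ℝ) := Nat.cast_nonneg _
        linarith
      have hDeq : D ω = (Ni i ω : ℝ) + 1 := by
        show max ((N ω : ℕ) : ℝ) 1 = _
        rw [hNeq]
        push_cast
        exact max_eq_left h1le
      show (if p i ω ≤ t then (1:ℝ) else 0) / D ω = _
      rw [if_pos h, hDeq]
      show 1 / ((Ni i ω : ℝ) + 1) = ind i ω * g i ω
      rw [show ind i ω = 1 from if_pos h, one_mul]
    · show (if p i ω ≤ t then (1:ℝ) else 0) / D ω = ind i ω * g i ω
      rw [if_neg h, zero_div, show ind i ω = 0 from if_neg h, zero_mul]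
  -- independence of ind i and g i
  have hindep_i : ∀ i, IndepFun (ind i) (g i) μ := by
    intro i
    have h1 := hindep.indepFun_finset {i} (Finset.univ.erase i) (by simp) hmeas
    set φ : ({x // x ∈ ({i} : Finset (Fin m))} → ℝ) → ℝ :=
      fun v => if v ⟨i, Finset.mem_singleton_self i⟩ ≤ t then 1 else 0 with hφ_def
    set ψ : ({x // x ∈ Finset.univ.erase i} → ℝ) → ℝ :=
      fun v => 1 / ((∑ j, if v j ≤ t then (1:ℝ) else 0) + 1) with hψ_def
    have hφ : Measurable φ :=
      Measurable.ite (measurableSet_le (measurable_pi_apply _) measurable_const)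
        measurable_const measurable_const
    have hψ : Measurable ψ := by
      simp only [hψ_def, one_div]
      exact ((Finset.measurable_sum _ fun j _ =>
        Measurable.ite (measurableSet_le (measurable_pi_apply j) measurable_const)
          measurable_const measurable_const).add measurable_const).inv
    have e1 : ind i = φ ∘ (fun a (j : {x // x ∈ ({i} : Finset (Fin m))}) => p j a) := by
      funext ω; rfl
    have e2 : g i = ψ ∘ (fun a (j : {x // x ∈ Finset.univ.erase i}) => p j a) := by
      funext ω
      simp only [hg_def, hψ_def, Function.comp_apply]
      congr 2
      have h3 : (∑ j : {x // x ∈ Finset.univ.erase i},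
          if p (↑j) ω ≤ t then (1:ℝ) else 0) = ∑ j ∈ Finset.univ.erase i, ind j ω :=
        Finset.sum_coe_sort (Finset.univ.erase i) (fun j => ind j ω)
      rw [h3, ← hcard]
    rw [e1, e2]
    exact h1.comp hφ hψ
  -- integral of indicator
  have hi_int : ∀ i, ∫ ω, ind i ω ∂μ = (μ {ω | p i ω ≤ t}).toReal := by
    intro i
    have hms : MeasurableSet {ω | p i ω ≤ t} :=
      measurableSet_le (hmeas i) measurable_const
    have : ind i = Set.indicator {ω | p i ω ≤ t} (fun _ => (1:ℝ)) := by
      funext ω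
      simp only [hind_def, Set.indicator_apply, Set.mem_setOf_eq]
    rw [this, integral_indicator_const (1:ℝ) hms, smul_eq_mul, mul_one]
    rfl
  -- pointwise g i ≤ invD
  have hgle : ∀ i ω, g i ω ≤ invD ω :=
    fun i ω => one_div_le_one_div_of_le (hDpos ω) (hDle i ω)
  have hinvD_nonneg : (0:ℝ) ≤ ∫ ω, invD ω ∂μ :=
    integral_nonneg fun ω => by positivity
  -- sum bound from havg
  have hsum_bound : ∑ i ∈ H0, (μ {ω | p i ω ≤ t}).toReal ≤ (m:ℝ) * t := by
    have h := havg t ⟨ht0, ht1⟩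
    have hm' : (0:ℝ) < m := by exact_mod_cast hm
    calc ∑ i ∈ H0, (μ {ω | p i ω ≤ t}).toReal
        = (m:ℝ) * ((1 / m : ℝ) * ∑ i ∈ H0, (μ {ω | p i ω ≤ t}).toReal) := by
          field_simp
      _ ≤ (m:ℝ) * t := by
          exact mul_le_mul_of_nonneg_left h (le_of_lt hm')
  -- rewrite the goal's integrands
  have hsetV : ∀ ω, (Set.ncard {i | i ∈ H0 ∧ p i ω ≤ t} : ℝ) =
      ((H0.filter fun j => p j ω ≤ t).card : ℝ) := by
    intro ω
    congr 1
    rw [← Set.ncard_coe_finset]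
    congr 1
    ext j
    simp
  have hsetS : ∀ ω, (Set.ncard {i | i ∉ H0 ∧ p i ω ≤ t} : ℝ) =
      ((H0ᶜ.filter fun j => p j ω ≤ t).card : ℝ) := by
    intro ω
    congr 1
    rw [← Set.ncard_coe_finset]
    congr 1
    ext j
    simp
  have hsplit : ∀ ω, ((H0.filter fun j => p j ω ≤ t).card : ℝ) +
      ((H0ᶜ.filter fun j => p j ω ≤ t).card : ℝ) = (N ω : ℝ) := by
    intro ω
    rw [hN_def]
    have hdis : Disjoint (H0.filter fun j => p j ω ≤ t)
        (H0ᶜ.filter fun j => p j ω ≤ t) :=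
      Finset.disjoint_filter_filter disjoint_compl_right
    have : (H0.filter fun j => p j ω ≤ t) ∪ (H0ᶜ.filter fun j => p j ω ≤ t) =
        Finset.univ.filter fun j => p j ω ≤ t := by
      rw [← Finset.filter_union, Finset.union_compl]
    simp only
    rw [← this, Finset.card_union_of_disjoint hdis]
    push_cast
    ring
  -- rewrite LHS and RHS integrals
  have hL : (∫ ω, (Set.ncard {i | i ∈ H0 ∧ p i ω ≤ t} : ℝ) /
        max ((Set.ncard {i | i ∈ H0 ∧ p i ω ≤ t} : ℝ) +
          (Set.ncard {i | i ∉ H0 ∧ p i ω ≤ t} : ℝ)) 1 ∂μ) =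
      ∫ ω, ∑ i ∈ H0, ind i ω / D ω ∂μ := by
    refine integral_congr_ae (Filter.Eventually.of_forall fun ω => ?_)
    show _ / max _ 1 = _
    rw [hsetV ω, hsetS ω, hsplit ω, hcard H0 ω, Finset.sum_div]
  have hR : (∫ ω, (m : ℝ) * t /
        max ((Set.ncard {i | i ∈ H0 ∧ p i ω ≤ t} : ℝ) +
          (Set.ncard {i | i ∉ H0 ∧ p i ω ≤ t} : ℝ)) 1 ∂μ) =
      ∫ ω, (m : ℝ) * t * invD ω ∂μ := by
    refine integral_congr_ae (Filter.Eventually.of_forall fun ω => ?_)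
    show _ / max _ 1 = _
    rw [hsetV ω, hsetS ω, hsplit ω]
    show _ = (m:ℝ) * t * (1 / D ω)
    rw [mul_one_div]
  rw [hL, hR]
  calc (∫ ω, ∑ i ∈ H0, ind i ω / D ω ∂μ)
      = ∑ i ∈ H0, ∫ ω, ind i ω / D ω ∂μ :=
        integral_finset_sum H0 fun i _ => hint_inddiv i
    _ = ∑ i ∈ H0, ∫ ω, ind i ω * g i ω ∂μ := by
        refine Finset.sum_congr rfl fun i _ => ?_
        exact integral_congr_ae (Filter.Eventually.of_forall fun ω => hkey i ω)
    _ = ∑ i ∈ H0, (μ {ω | p i ω ≤ t}).toReal * ∫ ω, g i ω ∂μ := by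
        refine Finset.sum_congr rfl fun i _ => ?_
        have hmul := (hindep_i i).integral_mul_eq_mul_integral
          (hint _ (hmeas_ind i) fun ω => by
            rw [abs_of_nonneg (hind01 i ω).1]; exact (hind01 i ω).2).aestronglyMeasurable
          (hint_g i).aestronglyMeasurable
        calc ∫ ω, ind i ω * g i ω ∂μ = ∫ ω, (ind i * g i) ω ∂μ := rfl
          _ = (∫ ω, ind i ω ∂μ) * ∫ ω, g i ω ∂μ := hmul
          _ = (μ {ω | p i ω ≤ t}).toReal * ∫ ω, g i ω ∂μ := by rw [hi_int i]
    _ ≤ ∑ i ∈ H0, (μ {ω | p i ω ≤ t}).toReal * ∫ ω, invD ω ∂μ := by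
        refine Finset.sum_le_sum fun i _ => ?_
        refine mul_le_mul_of_nonneg_left ?_ ENNReal.toReal_nonneg
        exact integral_mono (hint_g i) hint_invD fun ω => hgle i ω
    _ = (∑ i ∈ H0, (μ {ω | p i ω ≤ t}).toReal) * ∫ ω, invD ω ∂μ := by
        rw [Finset.sum_mul]
    _ ≤ ((m:ℝ) * t) * ∫ ω, invD ω ∂μ :=
        mul_le_mul_of_nonneg_right hsum_bound hinvD_nonneg
    _ = ∫ ω, (m : ℝ) * t * invD ω ∂μ := (integral_const_mul _ _).symm
end

section
/- Suppose V(t)/m ≤ t + o_P(1) uniformly in the sense that inf_{t∈[0,1]}[t − V(t)/m] ≥ o_P(1), and there exist t̲ ∈ (0,1] and η > 0 with P(R(t̲)/m ≥ η/2) → 1, where R(t) = #{i : p_i ≤ t} and V(t) = #{i ∈ H_0 : p_i ≤ t}. Then inf_{t∈[t̲,1]} [FDR̂(t) − FDP_t] ≥ o_P(1), where FDR̂(t) = m·t/(R(t)∨1) and FDP_t = V(t)/(R(t)∨1); i.e., for every ε > 0, P(∃ t ∈ [t̲,1] : FDR̂(t) − FDP_t < −ε) → 0. -/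
open MeasureTheory Filter Set Topology

/-- If `inf_{t∈[0,1]}[t − V(t)/m] ≥ o_P(1)` and `P(R(t̲)/m ≥ η/2) → 1` for some
`t̲ ∈ (0,1]` and `η > 0`, then `inf_{t∈[t̲,1]}[FDR̂(t) − FDP_t] ≥ o_P(1)`, where
`FDR̂(t) = m·t/(R(t)∨1)` and `FDP_t = V(t)/(R(t)∨1)`. -/
theorem stmt11 {Ω : ℕ → Type} [∀ n, MeasurableSpace (Ω n)]
    (μ : ∀ n, Measure (Ω n)) (hμ : ∀ n, IsProbabilityMeasure (μ n))
    (p : ∀ n, Fin n → Ω n → ℝ) (H0 : ∀ n, Finset (Fin n))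
    (hp : ∀ n i ω, p n i ω ∈ Set.Icc (0:ℝ) 1)
    (hunif : ∀ ε > (0:ℝ),
      Tendsto (fun n => μ n {ω | ∃ t ∈ Set.Icc (0:ℝ) 1,
        t - (Set.ncard {i | i ∈ H0 n ∧ p n i ω ≤ t} : ℝ) / n < -ε}) atTop (nhds 0))
    (tlow : ℝ) (htlow : tlow ∈ Set.Ioc (0:ℝ) 1) (η : ℝ) (hη : 0 < η)
    (hR : Tendsto (fun n => μ n {ω |
        η / 2 ≤ (Set.ncard {i : Fin n | p n i ω ≤ tlow} : ℝ) / n}) atTop (nhds 1)) :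
    ∀ ε > (0:ℝ),
      Tendsto (fun n => μ n {ω | ∃ t ∈ Set.Icc tlow 1,
        (n : ℝ) * t / max (Set.ncard {i : Fin n | p n i ω ≤ t} : ℝ) 1 -
          (Set.ncard {i | i ∈ H0 n ∧ p n i ω ≤ t} : ℝ) /
            max (Set.ncard {i : Fin n | p n i ω ≤ t} : ℝ) 1 < -ε})
        atTop (nhds 0) := by
  intro ε hε
  have hεt : 0 < ε * tlow := mul_pos hε htlow.1
  have key : ∀ n, {ω : Ω n | ∃ t ∈ Set.Icc tlow 1,
        (n : ℝ) * t / max (Set.ncard {i : Fin n | p n i ω ≤ t} : ℝ) 1 -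
          (Set.ncard {i | i ∈ H0 n ∧ p n i ω ≤ t} : ℝ) /
            max (Set.ncard {i : Fin n | p n i ω ≤ t} : ℝ) 1 < -ε} ⊆
      {ω : Ω n | ∃ t ∈ Set.Icc (0:ℝ) 1,
        t - (Set.ncard {i | i ∈ H0 n ∧ p n i ω ≤ t} : ℝ) / n < -(ε * tlow)} := by
    intro n ω hω
    obtain ⟨t, ht, hlt⟩ := hω
    refine ⟨t, ⟨le_trans htlow.1.le ht.1, ht.2⟩, ?_⟩
    rcases Nat.eq_zero_or_pos n with hn | hn
    · exfalso
      subst hn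
      have h1 : {i : Fin 0 | p 0 i ω ≤ t} = ∅ := Set.eq_empty_of_isEmpty _
      have h2 : {i : Fin 0 | i ∈ H0 0 ∧ p 0 i ω ≤ t} = ∅ := Set.eq_empty_of_isEmpty _
      rw [h1, h2] at hlt
      simp at hlt
      linarith
    set v : ℝ := (Set.ncard {i | i ∈ H0 n ∧ p n i ω ≤ t} : ℝ) with hv
    set r : ℝ := (Set.ncard {i : Fin n | p n i ω ≤ t} : ℝ) with hr
    have hvr : v ≤ r := by
      have hsub : {i | i ∈ H0 n ∧ p n i ω ≤ t} ⊆ {i : Fin n | p n i ω ≤ t} :=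
        fun i hi => hi.2
      rw [hv, hr]
      exact_mod_cast Set.ncard_le_ncard hsub (Set.toFinite _)
    have hvn : v ≤ n := by
      have := Set.ncard_le_ncard (Set.subset_univ {i | i ∈ H0 n ∧ p n i ω ≤ t})
        (Set.toFinite _)
      have huniv : (Set.univ : Set (Fin n)).ncard = n := by
        simp [Set.ncard_univ]
      rw [huniv] at this
      rw [hv]
      exact_mod_cast this
    have hv0 : 0 ≤ v := Nat.cast_nonneg _
    have hrM : r ≤ max r 1 := le_max_left _ _
    have hM1 : (1:ℝ) ≤ max r 1 := le_max_right _ _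
    have hM0 : (0:ℝ) < max r 1 := lt_of_lt_of_le one_pos hM1
    have hn0 : (0:ℝ) < n := by exact_mod_cast hn
    have hn1 : (1:ℝ) ≤ n := by exact_mod_cast hn
    have hlt' : (n : ℝ) * t - v < -ε * max r 1 := by
      rw [div_sub_div_same] at hlt
      have := (div_lt_iff₀ hM0).mp hlt
      linarith [this]
    have hvM : v ≤ max r 1 := le_trans hvr hrM
    have hA : (n : ℝ) * t - v < -ε * v := by nlinarith
    have ht0 : tlow ≤ t := ht.1
    have htpos : 0 < t := lt_of_lt_of_le htlow.1 ht0
    have hgoal : (n : ℝ) * t - v < -(ε * tlow) * n := by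
      rcases le_or_gt 1 ε with h1ε | h1ε
      · nlinarith
      · nlinarith [mul_pos hn0 htpos, mul_nonneg hε.le hv0,
          mul_nonneg (mul_nonneg hε.le hv0) (sub_pos.mpr h1ε).le]
    have heq : t - v / n = ((n : ℝ) * t - v) / n := by
      field_simp
    rw [heq]
    rw [div_lt_iff₀ hn0]
    linarith [hgoal]
  have hle : ∀ n, μ n {ω : Ω n | ∃ t ∈ Set.Icc tlow 1,
        (n : ℝ) * t / max (Set.ncard {i : Fin n | p n i ω ≤ t} : ℝ) 1 -
          (Set.ncard {i | i ∈ H0 n ∧ p n i ω ≤ t} : ℝ) /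
            max (Set.ncard {i : Fin n | p n i ω ≤ t} : ℝ) 1 < -ε} ≤
      μ n {ω : Ω n | ∃ t ∈ Set.Icc (0:ℝ) 1,
        t - (Set.ncard {i | i ∈ H0 n ∧ p n i ω ≤ t} : ℝ) / n < -(ε * tlow)} :=
    fun n => measure_mono (key n)
  exact tendsto_of_tendsto_of_tendsto_of_le_of_le tendsto_const_nhds
    (hunif (ε * tlow) hεt) (fun n => zero_le) hle
end
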